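/- Let θ be irrational and F ⊆ ℤ a finite set with 0 ∉ F. Then there exist a measurable set I ⊆ ℝ/ℤ of positive Lebesgue measure m(I) > 0 such that, setting f = (1/m(I))·χ_I ∈ L¹(ℝ/ℤ) and h = χ_I ∈ L^∞(ℝ/ℤ), one has ∫ f(s) h(s + nθ) ds = 1 for n = 0 and = 0 for all n ∈ F. -/

import Mathlib

open MeasureTheory

theorem exists_set_slice_values
    (θ : ℝ) (hθ : Irrational θ) (F : Finset ℤ) (hF : (0 : ℤ) ∉ F) :
    ∃ I : Set (AddCircle (1 : ℝ)), MeasurableSet I ∧ 0 < volume I ∧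
      (∫ s : AddCircle (1 : ℝ),
          (volume I).toReal⁻¹ * I.indicator (fun _ => (1 : ℝ)) s *
            I.indicator (fun _ => (1 : ℝ)) (s + (0 : ℤ) • ((θ : AddCircle (1 : ℝ))))) = 1 ∧
      ∀ n ∈ F,
        (∫ s : AddCircle (1 : ℝ),
          (volume I).toReal⁻¹ * I.indicator (fun _ => (1 : ℝ)) s *
            I.indicator (fun _ => (1 : ℝ)) (s + n • ((θ : AddCircle (1 : ℝ))))) = 0 := by
  set θc : AddCircle (1 : ℝ) := (θ : AddCircle (1 : ℝ)) with hθc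
  have hne : ∀ n ∈ F, (n • θc) ≠ 0 := by
    intro n hn h0
    have hn0 : n ≠ 0 := fun h => hF (h ▸ hn)
    have : ((n • θ : ℝ) : AddCircle (1 : ℝ)) = 0 := by
      rw [AddCircle.coe_zsmul]; exact h0
    rw [AddCircle.coe_eq_zero_iff] at this
    obtain ⟨k, hk⟩ := this
    apply hθ
    refine ⟨(k : ℚ) / (n : ℚ), ?_⟩
    have hk' : (k : ℝ) = n * θ := by
      simpa [zsmul_eq_mul] using hk
    push_cast
    field_simp
    rw [hk']
  have hpos : ∀ n ∈ F, (0 : ℝ) < ‖n • θc‖ := fun n hn => norm_pos_iff.mpr (hne n hn)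
  -- choose ε
  set S : Finset ℝ := insert 1 (F.image fun n => ‖n • θc‖) with hS
  have hSne : S.Nonempty := ⟨1, Finset.mem_insert_self _ _⟩
  set ε : ℝ := S.min' hSne / 3 with hε
  have hmin_pos : 0 < S.min' hSne := by
    have := S.min'_mem hSne
    rcases Finset.mem_insert.mp this with h | h
    · rw [h]; norm_num
    · obtain ⟨n, hn, hn'⟩ := Finset.mem_image.mp h
      rw [← hn']; exact hpos n hn
  have hεpos : 0 < ε := by positivity
  have hεlt : ∀ n ∈ F, 2 * ε < ‖n • θc‖ := by
    intro n hn
    have h1 : S.min' hSne ≤ ‖n • θc‖ :=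
      Finset.min'_le _ _ (Finset.mem_insert_of_mem (Finset.mem_image_of_mem _ hn))
    rw [hε]; linarith
  refine ⟨Metric.ball 0 ε, measurableSet_ball, ?_, ?_, ?_⟩
  · exact Metric.measure_ball_pos _ _ hεpos
  · -- n = 0 case
    have hvol_lt : volume (Metric.ball (0 : AddCircle (1:ℝ)) ε) < ⊤ := measure_lt_top _ _
    have hvol_pos : 0 < volume (Metric.ball (0 : AddCircle (1:ℝ)) ε) :=
      Metric.measure_ball_pos _ _ hεpos
    have htoReal : (volume (Metric.ball (0 : AddCircle (1:ℝ)) ε)).toReal ≠ 0 :=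
      (ENNReal.toReal_pos hvol_pos.ne' hvol_lt.ne).ne'
    have heq : ∀ s : AddCircle (1 : ℝ),
        (volume (Metric.ball (0 : AddCircle (1:ℝ)) ε)).toReal⁻¹ *
          (Metric.ball (0:AddCircle (1:ℝ)) ε).indicator (fun _ => (1:ℝ)) s *
          (Metric.ball (0:AddCircle (1:ℝ)) ε).indicator (fun _ => (1:ℝ)) (s + (0:ℤ) • θc)
        = (volume (Metric.ball (0 : AddCircle (1:ℝ)) ε)).toReal⁻¹ *
            (Metric.ball (0:AddCircle (1:ℝ)) ε).indicator (fun _ => (1:ℝ)) s := by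
      intro s
      rw [zero_smul, add_zero]
      by_cases hs : s ∈ Metric.ball (0:AddCircle (1:ℝ)) ε
      · simp [Set.indicator_of_mem hs]
      · simp [Set.indicator_of_notMem hs]
    simp_rw [heq]
    rw [integral_const_mul]
    have : ∫ s : AddCircle (1:ℝ),
        (Metric.ball (0:AddCircle (1:ℝ)) ε).indicator (fun _ => (1:ℝ)) s
        = (volume (Metric.ball (0 : AddCircle (1:ℝ)) ε)).toReal := by
      simpa [Measure.real, Pi.one_def] using integral_indicator_one (measurableSet_ball
        (x := (0:AddCircle (1:ℝ))) (ε := ε))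
    rw [this, inv_mul_cancel₀ htoReal]
  · -- n ∈ F case
    intro n hn
    have heq : ∀ s : AddCircle (1 : ℝ),
        (volume (Metric.ball (0 : AddCircle (1:ℝ)) ε)).toReal⁻¹ *
          (Metric.ball (0:AddCircle (1:ℝ)) ε).indicator (fun _ => (1:ℝ)) s *
          (Metric.ball (0:AddCircle (1:ℝ)) ε).indicator (fun _ => (1:ℝ)) (s + n • θc)
        = 0 := by
      intro s
      by_cases hs : s ∈ Metric.ball (0:AddCircle (1:ℝ)) ε
      · by_cases hs' : s + n • θc ∈ Metric.ball (0:AddCircle (1:ℝ)) ε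
        · exfalso
          rw [Metric.mem_ball, dist_zero_right] at hs hs'
          have : ‖n • θc‖ = ‖(s + n • θc) - s‖ := by rw [add_sub_cancel_left]
          have h2 : ‖(s + n • θc) - s‖ ≤ ‖s + n • θc‖ + ‖s‖ := norm_sub_le _ _
          have := hεlt n hn
          linarith [this, h2, hs, hs', ‹‖n • θc‖ = ‖(s + n • θc) - s‖›]
        · simp [Set.indicator_of_notMem hs']
      · simp [Set.indicator_of_notMem hs]
    simp_rw [heq]
    exact integral_zero _ _
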